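/- arXiv:2510.23309 — 2 statements merged into one kernel-verified Lean document; each statement's English description precedes it below -/
import Mathlib

section
/- Let 0 < α < 2 and β > 0. There exists a constant C_{α,β} > 0 such that for all ω ≥ 0 and t ≥ 0, E_{α,β}(ω t^α) ≤ C_{α,β} (1 + ω^{(1-β)/α})(1 + t^{1-β}) exp(ω^{1/α} t), where E_{α,β}(z) = Σ_{n≥0} z^n / Γ(β + nα) is the two-parameter Mittag-Leffler function. -/
open Real

lemma gamma_interp {x y θ : ℝ} (hx : 0 < x) (hy : 0 < y) (hθ0 : 0 ≤ θ) (hθ1 : θ ≤ 1) :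
    Real.Gamma (θ * x + (1 - θ) * y) ≤ Real.Gamma x ^ θ * Real.Gamma y ^ (1 - θ) := by
  have h := Real.convexOn_log_Gamma.2 (Set.mem_Ioi.2 hx) (Set.mem_Ioi.2 hy) hθ0
    (show (0:ℝ) ≤ 1 - θ by linarith) (show θ + (1 - θ) = 1 by ring)
  simp only [smul_eq_mul, Function.comp_apply] at h
  have hz : 0 < θ * x + (1 - θ) * y := by
    rcases eq_or_lt_of_le hθ0 with h0 | h0
    · rw [← h0]; simpa using hy
    · have h1 : 0 ≤ (1 - θ) * y := mul_nonneg (by linarith) hy.le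
      nlinarith
  have hΓz := Real.Gamma_pos_of_pos hz
  have hΓx := Real.Gamma_pos_of_pos hx
  have hΓy := Real.Gamma_pos_of_pos hy
  calc Real.Gamma (θ * x + (1 - θ) * y) = Real.exp (Real.log (Real.Gamma (θ * x + (1 - θ) * y))) :=
        (Real.exp_log hΓz).symm
    _ ≤ Real.exp (θ * Real.log (Real.Gamma x) + (1 - θ) * Real.log (Real.Gamma y)) :=
        Real.exp_le_exp.2 h
    _ = Real.Gamma x ^ θ * Real.Gamma y ^ (1 - θ) := by
        rw [Real.exp_add, Real.rpow_def_of_pos hΓx, Real.rpow_def_of_pos hΓy,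
          mul_comm (Real.log _) θ, mul_comm (Real.log _) (1-θ)]

lemma gamma_lb_a {μ : ℝ} (hμ : 0 < μ) :
    (Nat.factorial ⌊μ⌋₊ : ℝ) * μ ^ (μ - ⌊μ⌋₊) ≤ Real.Gamma (μ + 1) := by
  set k := ⌊μ⌋₊ with hk
  have hkle : (k:ℝ) ≤ μ := Nat.floor_le hμ.le
  have hklt : μ < (k:ℝ) + 1 := Nat.lt_floor_add_one μ
  have hθ0 : 0 ≤ μ - (k:ℝ) := by linarith
  have hθ1 : μ - (k:ℝ) ≤ 1 := by linarith
  have h := gamma_interp hμ (show (0:ℝ) < μ + 1 by linarith) hθ0 hθ1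
  have harg : (μ - k) * μ + (1 - (μ - k)) * (μ + 1) = (k:ℝ) + 1 := by ring
  rw [harg, Real.Gamma_nat_eq_factorial] at h
  have hΓ1 : 0 < Real.Gamma (μ + 1) := Real.Gamma_pos_of_pos (by linarith)
  have hG : Real.Gamma μ = Real.Gamma (μ + 1) / μ := by
    rw [Real.Gamma_add_one hμ.ne']; field_simp
  have hμθ : 0 < μ ^ (μ - (k:ℝ)) := Real.rpow_pos_of_pos hμ _
  calc (Nat.factorial k : ℝ) * μ ^ (μ - (k:ℝ))
      ≤ Real.Gamma μ ^ (μ - (k:ℝ)) * Real.Gamma (μ + 1) ^ (1 - (μ - (k:ℝ))) * μ ^ (μ - (k:ℝ)) :=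
        mul_le_mul_of_nonneg_right h hμθ.le
    _ = Real.Gamma (μ + 1) := by
        rw [hG, Real.div_rpow hΓ1.le hμ.le]
        rw [div_mul_eq_mul_div, div_mul_eq_mul_div, ← Real.rpow_add hΓ1,
          mul_div_assoc, div_self hμθ.ne']
        simp

lemma gamma_lb_b {μ : ℝ} (hμ : 0 ≤ μ) :
    (Nat.factorial (⌊μ⌋₊ + 1) : ℝ) ≤ Real.Gamma (μ + 1) * (μ + 1) ^ (1 - (μ - ⌊μ⌋₊)) := by
  set k := ⌊μ⌋₊ with hk
  have hkle : (k:ℝ) ≤ μ := Nat.floor_le hμ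
  have hklt : μ < (k:ℝ) + 1 := Nat.lt_floor_add_one μ
  have hθ0 : 0 ≤ μ - (k:ℝ) := by linarith
  have hθ1 : μ - (k:ℝ) ≤ 1 := by linarith
  have h := gamma_interp (show (0:ℝ) < μ + 1 by linarith) (show (0:ℝ) < μ + 2 by linarith) hθ0 hθ1
  have harg : (μ - k) * (μ + 1) + (1 - (μ - k)) * (μ + 2) = ((k + 1 : ℕ) : ℝ) + 1 := by
    push_cast; ring
  rw [harg, Real.Gamma_nat_eq_factorial] at h
  have hΓ1 : 0 < Real.Gamma (μ + 1) := Real.Gamma_pos_of_pos (by linarith)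
  have hG : Real.Gamma (μ + 2) = (μ + 1) * Real.Gamma (μ + 1) := by
    have := Real.Gamma_add_one (show μ + 1 ≠ 0 by linarith)
    rw [show μ + 2 = μ + 1 + 1 by ring, this]
  calc (Nat.factorial (k + 1) : ℝ) ≤ Real.Gamma (μ+1) ^ (μ - (k:ℝ)) * Real.Gamma (μ + 2) ^ (1 - (μ - (k:ℝ))) := h
    _ = Real.Gamma (μ + 1) * (μ + 1) ^ (1 - (μ - ⌊μ⌋₊)) := by
        rw [hG, Real.mul_rpow (by linarith) hΓ1.le, ← mul_assoc,
          mul_comm (Real.Gamma (μ+1) ^ (μ - (k:ℝ))), mul_assoc, ← Real.rpow_add hΓ1,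
          show μ - (k:ℝ) + (1 - (μ - (k:ℝ))) = 1 by ring, Real.rpow_one]
        ring

lemma term_bound {s μ : ℝ} (hs : 0 < s) (hμ : 0 < μ) :
    s ^ μ / Real.Gamma (μ + 1) ≤
      2 * (s ^ ⌊μ⌋₊ / (Nat.factorial ⌊μ⌋₊ : ℝ) +
        s ^ (⌊μ⌋₊ + 1) / (Nat.factorial (⌊μ⌋₊ + 1) : ℝ)) := by
  set k := ⌊μ⌋₊ with hkdef
  have hkle : (k:ℝ) ≤ μ := Nat.floor_le hμ.le
  have hklt : μ < (k:ℝ) + 1 := Nat.lt_floor_add_one μ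
  have hθ0 : 0 ≤ μ - (k:ℝ) := by linarith
  have hθ1 : μ - (k:ℝ) ≤ 1 := by linarith
  have hΓ1 : 0 < Real.Gamma (μ + 1) := Real.Gamma_pos_of_pos (by linarith)
  have hfk : (0:ℝ) < (Nat.factorial k : ℝ) := by positivity
  have hfk1 : (0:ℝ) < (Nat.factorial (k+1) : ℝ) := by positivity
  have ht1 : (0:ℝ) ≤ s ^ k / (Nat.factorial k : ℝ) := by positivity
  have ht2 : (0:ℝ) ≤ s ^ (k+1) / (Nat.factorial (k+1) : ℝ) := by positivity
  rcases le_or_gt s μ with hsμ | hsμ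
  · -- s ≤ μ
    have ha := gamma_lb_a hμ
    rw [← hkdef] at ha
    have hμθ : (0:ℝ) < μ ^ (μ - (k:ℝ)) := Real.rpow_pos_of_pos hμ _
    have e1 : s ^ μ = s ^ k * s ^ (μ - (k:ℝ)) := by
      rw [← Real.rpow_natCast s k, ← Real.rpow_add hs]; ring_nf
    have key : s ^ μ / Real.Gamma (μ + 1) ≤ s ^ k / (Nat.factorial k : ℝ) * (s/μ) ^ (μ - (k:ℝ)) := by
      calc s ^ μ / Real.Gamma (μ + 1) ≤ s ^ μ / ((Nat.factorial k : ℝ) * μ ^ (μ - (k:ℝ))) := by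
            gcongr
        _ = s ^ k / (Nat.factorial k : ℝ) * (s/μ) ^ (μ - (k:ℝ)) := by
            rw [e1, Real.div_rpow hs.le hμ.le]
            field_simp
    have hle1 : (s/μ) ^ (μ - (k:ℝ)) ≤ 1 :=
      Real.rpow_le_one (by positivity) (div_le_one_of_le₀ hsμ hμ.le) hθ0
    have : s ^ k / (Nat.factorial k : ℝ) * (s/μ) ^ (μ - (k:ℝ)) ≤ s ^ k / (Nat.factorial k : ℝ) :=
      by nlinarith
    linarith
  rcases le_or_gt 1 s with hs1 | hs1
  · -- μ < s, 1 ≤ s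
    have hb := gamma_lb_b hμ.le
    rw [← hkdef] at hb
    have hpθ : (0:ℝ) < (μ+1) ^ (1 - (μ - (k:ℝ))) := Real.rpow_pos_of_pos (by linarith) _
    have e2 : s ^ μ = s ^ (k+1) / s ^ (1 - (μ - (k:ℝ))) := by
      rw [← Real.rpow_natCast s (k+1), ← Real.rpow_sub hs]
      congr 1
      push_cast; ring
    have key : s ^ μ / Real.Gamma (μ + 1) ≤
        s ^ (k+1) / (Nat.factorial (k+1) : ℝ) * ((μ+1)/s) ^ (1 - (μ - (k:ℝ))) := by
      calc s ^ μ / Real.Gamma (μ + 1)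
          ≤ s ^ μ / ((Nat.factorial (k+1) : ℝ) / (μ+1) ^ (1 - (μ - (k:ℝ)))) := by
            gcongr
            exact (div_le_iff₀ hpθ).2 hb
        _ = s ^ (k+1) / (Nat.factorial (k+1) : ℝ) * ((μ+1)/s) ^ (1 - (μ - (k:ℝ))) := by
            rw [e2, Real.div_rpow (by linarith : (0:ℝ) ≤ μ+1) hs.le]
            field_simp
    have hratio : (μ+1)/s ≤ 2 := by rw [div_le_iff₀ hs]; linarith
    have hle2 : ((μ+1)/s) ^ (1 - (μ - (k:ℝ))) ≤ 2 := by
      calc ((μ+1)/s) ^ (1 - (μ - (k:ℝ))) ≤ 2 ^ (1 - (μ - (k:ℝ))) :=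
            Real.rpow_le_rpow (by positivity) hratio (by linarith)
        _ ≤ 2 ^ (1:ℝ) := Real.rpow_le_rpow_of_exponent_le one_le_two (by linarith)
        _ = 2 := Real.rpow_one 2
    have : s ^ (k+1) / (Nat.factorial (k+1) : ℝ) * ((μ+1)/s) ^ (1 - (μ - (k:ℝ))) ≤
        2 * (s ^ (k+1) / (Nat.factorial (k+1) : ℝ)) := by nlinarith
    linarith
  · -- μ < s < 1
    have hμ1 : μ < 1 := lt_trans hsμ hs1
    have hk0 : k = 0 := Nat.floor_eq_zero.2 hμ1
    have hsμ1 : s ^ μ ≤ 1 := Real.rpow_le_one hs.le hs1.le hμ.le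
    have hb := gamma_lb_b hμ.le
    rw [← hkdef, hk0] at hb
    have hexp : (μ+1) ^ (1 - (μ - ((0:ℕ):ℝ))) ≤ 2 := by
      calc (μ+1) ^ (1 - (μ - ((0:ℕ):ℝ))) ≤ (μ+1) ^ (1:ℝ) := by
            apply Real.rpow_le_rpow_of_exponent_le (by linarith)
            push_cast; linarith
        _ = μ + 1 := Real.rpow_one _
        _ ≤ 2 := by linarith
    have hΓlb : (1:ℝ)/2 ≤ Real.Gamma (μ + 1) := by
      have h1 : (1:ℝ) ≤ Real.Gamma (μ + 1) * (μ+1) ^ (1 - (μ - ((0:ℕ):ℝ))) := by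
        simpa [Nat.factorial] using hb
      nlinarith [Real.rpow_pos_of_pos (show (0:ℝ) < μ+1 by linarith) (1 - (μ - ((0:ℕ):ℝ)))]
    have hLHS : s ^ μ / Real.Gamma (μ + 1) ≤ 2 := by
      rw [div_le_iff₀ hΓ1]; nlinarith
    have : (2:ℝ) ≤ 2 * (s ^ k / (Nat.factorial k : ℝ) + s ^ (k+1) / (Nat.factorial (k+1) : ℝ)) := by
      rw [hk0]
      simp [Nat.factorial]
      nlinarith
    linarith

lemma sum_floor_comp_le (α β : ℝ) (hα : 0 < α) (f : ℕ → ℝ) (hf0 : ∀ k, 0 ≤ f k)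
    (hfs : Summable f) (T : Finset ℕ) (hT : ∀ n ∈ T, (0:ℝ) ≤ (n:ℝ) * α + β - 1) :
    ∑ n ∈ T, f ⌊(n:ℝ) * α + β - 1⌋₊ ≤ (⌈1/α⌉₊ : ℝ) * ∑' k, f k := by
  classical
  set M := ⌈1/α⌉₊ with hM
  have hM1 : 1 ≤ M := Nat.one_le_ceil_iff.2 (by positivity)
  set g : ℕ → ℕ := fun n => ⌊(n:ℝ) * α + β - 1⌋₊ with hg
  -- fibers are small
  have hfiber : ∀ j, (T.filter (fun n => g n = j)).card ≤ M := by
    intro j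
    set F := T.filter (fun n => g n = j) with hF
    rcases F.eq_empty_or_nonempty with he | hne
    · simp [he]
    · have hmin := F.min'_mem hne
      have hsub : F ⊆ Finset.Icc (F.min' hne) (F.min' hne + (M - 1)) := by
        intro n hn
        rw [Finset.mem_Icc]
        refine ⟨F.min'_le n hn, ?_⟩
        set m := F.min' hne with hm
        have hmT : m ∈ T := (Finset.mem_filter.1 hmin).1
        have hnT : n ∈ T := (Finset.mem_filter.1 hn).1
        have hgm : g m = j := (Finset.mem_filter.1 hmin).2
        have hgn : g n = j := (Finset.mem_filter.1 hn).2
        have hmn : m ≤ n := F.min'_le n hn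
        -- real estimates
        have hμm : (0:ℝ) ≤ (m:ℝ) * α + β - 1 := hT m hmT
        have hμn : (0:ℝ) ≤ (n:ℝ) * α + β - 1 := hT n hnT
        have h1 : (j:ℝ) ≤ (m:ℝ) * α + β - 1 := by
          rw [← hgm]; exact Nat.floor_le hμm
        have h2 : (n:ℝ) * α + β - 1 < (j:ℝ) + 1 := by
          rw [← hgn]; exact Nat.lt_floor_add_one _
        have h3 : ((n:ℝ) - m) * α < 1 := by nlinarith
        have h4 : ((n:ℝ) - m) < 1/α := by
          rw [lt_div_iff₀ hα]; linarith
        have h5 : ((n:ℝ) - m) < M := lt_of_lt_of_le h4 (Nat.le_ceil _)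
        have h6 : n - m < M := by
          have h7 : ((n - m : ℕ) : ℝ) < M := by rw [Nat.cast_sub hmn]; exact h5
          exact_mod_cast h7
        omega
      calc F.card ≤ (Finset.Icc (F.min' hne) (F.min' hne + (M - 1))).card :=
            Finset.card_le_card hsub
        _ = M := by rw [Nat.card_Icc]; omega
  have hmaps : ∀ n ∈ T, g n ∈ T.image g := fun n hn => Finset.mem_image_of_mem g hn
  calc ∑ n ∈ T, f (g n) = ∑ j ∈ T.image g, ∑ _n ∈ T.filter (fun n => g n = j), f j :=
        (Finset.sum_fiberwise_of_maps_to' hmaps f).symm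
    _ = ∑ j ∈ T.image g, ((T.filter (fun n => g n = j)).card : ℝ) * f j := by
        simp [Finset.sum_const, nsmul_eq_mul]
    _ ≤ ∑ j ∈ T.image g, (M : ℝ) * f j := by
        apply Finset.sum_le_sum
        intro j hj
        exact mul_le_mul_of_nonneg_right (by exact_mod_cast hfiber j) (hf0 j)
    _ = (M:ℝ) * ∑ j ∈ T.image g, f j := by rw [Finset.mul_sum]
    _ ≤ (M:ℝ) * ∑' k, f k := by
        apply mul_le_mul_of_nonneg_left _ (by positivity)
        exact Summable.sum_le_tsum _ (fun k _ => hf0 k) hfs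

lemma key (α β : ℝ) (hα : 0 < α) (hβ : 0 < β) :
    ∃ C : ℝ, 0 < C ∧ 1 / Real.Gamma β ≤ C ∧ ∀ s : ℝ, 0 < s →
      (∑' n : ℕ, s ^ ((n:ℝ) * α) / Real.Gamma (β + n * α)) ≤
        C * (1 + s ^ (1 - β)) * Real.exp s := by
  classical
  set n₀ := ⌈(1 - β)/α⌉₊ with hn₀
  set M := ⌈1/α⌉₊ with hMdef
  have hM1 : 1 ≤ M := Nat.one_le_ceil_iff.2 (by positivity)
  have hΓpos : ∀ n : ℕ, 0 < Real.Gamma (β + n * α) :=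
    fun n => Real.Gamma_pos_of_pos (by positivity)
  have hΓβ : 0 < Real.Gamma β := Real.Gamma_pos_of_pos hβ
  set C₁ := ∑ n ∈ Finset.range (n₀+1),
      ((Nat.factorial ⌈(n:ℝ)*α⌉₊ : ℝ) + 1)/Real.Gamma (β + n * α) with hC₁
  have hC₁0 : 0 ≤ C₁ := Finset.sum_nonneg fun n _ => by
    have := hΓpos n; positivity
  have hC₁β : 2 / Real.Gamma β ≤ C₁ := by
    have h0 : ((Nat.factorial ⌈((0:ℕ):ℝ)*α⌉₊ : ℝ) + 1)/Real.Gamma (β + (0:ℕ) * α)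
        = 2 / Real.Gamma β := by
      norm_num [Nat.factorial]
    calc 2 / Real.Gamma β
        = ((Nat.factorial ⌈((0:ℕ):ℝ)*α⌉₊ : ℝ) + 1)/Real.Gamma (β + (0:ℕ) * α) := h0.symm
      _ ≤ C₁ := Finset.single_le_sum
          (f := fun n : ℕ => ((Nat.factorial ⌈(n:ℝ)*α⌉₊ : ℝ) + 1)/Real.Gamma (β + n * α))
          (fun n _ => by have := hΓpos n; positivity) (Finset.mem_range.2 (Nat.succ_pos n₀))
  refine ⟨C₁ + 4*M, by positivity, ?_, ?_⟩
  · have h12 : 1 / Real.Gamma β ≤ 2 / Real.Gamma β := by gcongr; norm_num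
    have hM0 : (0:ℝ) ≤ (M:ℝ) := by positivity
    linarith
  intro s hs
  have hexp1 : 1 ≤ Real.exp s := Real.one_le_exp hs.le
  have hexppos := Real.exp_pos s
  set f : ℕ → ℝ := fun k => s^k/(Nat.factorial k : ℝ) + s^(k+1)/(Nat.factorial (k+1):ℝ) with hf
  have hf0 : ∀ k, 0 ≤ f k := fun k => by positivity
  have hsum1 : Summable (fun k : ℕ => s^k/(Nat.factorial k : ℝ)) :=
    Real.summable_pow_div_factorial s
  have hsum2 : Summable (fun k : ℕ => s^(k+1)/(Nat.factorial (k+1) : ℝ)) := by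
    have h := hsum1.comp_injective (add_left_injective 1)
    exact h
  have hfs : Summable f := hsum1.add hsum2
  have htsum1 : (∑' k:ℕ, s^k/(Nat.factorial k : ℝ)) ≤ Real.exp s :=
    Real.tsum_le_of_sum_range_le (fun k => by positivity)
      (fun K => Real.sum_le_exp_of_nonneg hs.le K)
  have htsum2 : (∑' k:ℕ, s^(k+1)/(Nat.factorial (k+1) : ℝ)) ≤ Real.exp s := by
    apply Real.tsum_le_of_sum_range_le (fun k => by positivity)
    intro K
    have h1 := Real.sum_le_exp_of_nonneg hs.le (K+1)
    have h2 := Finset.sum_range_succ' (fun i => s^i/(Nat.factorial i : ℝ)) K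
    simp only [pow_zero, Nat.factorial_zero, Nat.cast_one, div_one] at h2
    linarith
  have htsumf : (∑' k, f k) ≤ 2 * Real.exp s := by
    rw [hf, Summable.tsum_add hsum1 hsum2]
    linarith
  apply Real.tsum_le_of_sum_range_le
  · intro n; have := hΓpos n; positivity
  intro N
  rw [← Finset.sum_filter_add_sum_filter_not (Finset.range N) (fun n => n ≤ n₀)]
  -- Part A
  have stepA : ∀ n:ℕ, s^((n:ℝ)*α)/Real.Gamma (β + n * α) ≤
      ((Nat.factorial ⌈(n:ℝ)*α⌉₊ : ℝ)+1)/Real.Gamma (β + n * α) * Real.exp s := by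
    intro n
    have hnα0 : (0:ℝ) ≤ (n:ℝ)*α := by positivity
    have hm : (n:ℝ)*α ≤ (⌈(n:ℝ)*α⌉₊ : ℝ) := Nat.le_ceil _
    have hfact0 : (0:ℝ) ≤ (Nat.factorial ⌈(n:ℝ)*α⌉₊ : ℝ) := by positivity
    have hnum : s^((n:ℝ)*α) ≤ ((Nat.factorial ⌈(n:ℝ)*α⌉₊ : ℝ)+1) * Real.exp s := by
      rcases le_or_gt s 1 with h1 | h1
      · have hle1 : s^((n:ℝ)*α) ≤ 1 := Real.rpow_le_one hs.le h1 hnα0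
        nlinarith
      · set m := ⌈(n:ℝ)*α⌉₊ with hmdef
        have hfactpos : (0:ℝ) < (Nat.factorial m : ℝ) := by positivity
        calc s^((n:ℝ)*α) ≤ s^((m:ℕ):ℝ) := Real.rpow_le_rpow_of_exponent_le h1.le hm
          _ = s^(m:ℕ) := Real.rpow_natCast s m
          _ ≤ (Nat.factorial m : ℝ) * Real.exp s := by
              have hsingle : s^(m:ℕ)/(Nat.factorial m : ℝ) ≤
                  ∑ i ∈ Finset.range (m+1), s^i/(Nat.factorial i : ℝ) :=
                Finset.single_le_sum (f := fun i => s^i/(Nat.factorial i : ℝ))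
                  (fun i _ => by positivity) (Finset.self_mem_range_succ m)
              have hexpsum := Real.sum_le_exp_of_nonneg hs.le (m+1)
              have : s^(m:ℕ)/(Nat.factorial m : ℝ) ≤ Real.exp s := le_trans hsingle hexpsum
              rw [div_le_iff₀ hfactpos] at this
              linarith [this, mul_comm (Real.exp s) (Nat.factorial m : ℝ)]
          _ ≤ ((Nat.factorial m : ℝ)+1) * Real.exp s := by nlinarith
    rw [div_mul_eq_mul_div]
    have hΓn := hΓpos n
    gcongr
  have hA : ∑ n ∈ (Finset.range N).filter (fun n => n ≤ n₀),
      s^((n:ℝ)*α)/Real.Gamma (β + n * α) ≤ C₁ * Real.exp s := by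
    calc ∑ n ∈ (Finset.range N).filter (fun n => n ≤ n₀),
          s^((n:ℝ)*α)/Real.Gamma (β + n * α)
        ≤ ∑ n ∈ (Finset.range N).filter (fun n => n ≤ n₀),
          ((Nat.factorial ⌈(n:ℝ)*α⌉₊ : ℝ)+1)/Real.Gamma (β + n * α) * Real.exp s :=
          Finset.sum_le_sum (fun n _ => stepA n)
      _ = (∑ n ∈ (Finset.range N).filter (fun n => n ≤ n₀),
          ((Nat.factorial ⌈(n:ℝ)*α⌉₊ : ℝ)+1)/Real.Gamma (β + n * α)) * Real.exp s :=
          (Finset.sum_mul _ _ _).symm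
      _ ≤ C₁ * Real.exp s := by
          apply mul_le_mul_of_nonneg_right _ hexppos.le
          apply Finset.sum_le_sum_of_subset_of_nonneg
          · intro n hn
            rw [Finset.mem_filter, Finset.mem_range] at hn
            rw [Finset.mem_range]
            omega
          · intro n _ _
            have := hΓpos n; positivity
  -- Part B
  set T := (Finset.range N).filter (fun n => ¬ n ≤ n₀) with hT
  have hTμ : ∀ n ∈ T, (0:ℝ) ≤ (n:ℝ)*α + β - 1 := by
    intro n hn
    rw [hT, Finset.mem_filter] at hn
    have hn' : n₀ < n := by omega
    have hceil : (1-β)/α ≤ (n₀:ℝ) := Nat.le_ceil _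
    have hcast : (n₀:ℝ) < (n:ℝ) := by exact_mod_cast hn'
    have : (1-β)/α < (n:ℝ) := lt_of_le_of_lt hceil hcast
    rw [div_lt_iff₀ hα] at this
    nlinarith
  have hTμpos : ∀ n ∈ T, (0:ℝ) < (n:ℝ)*α + β - 1 := by
    intro n hn
    rw [hT, Finset.mem_filter] at hn
    have hn' : n₀ < n := by omega
    have hceil : (1-β)/α ≤ (n₀:ℝ) := Nat.le_ceil _
    have hcast : (n₀:ℝ) < (n:ℝ) := by exact_mod_cast hn'
    have : (1-β)/α < (n:ℝ) := lt_of_le_of_lt hceil hcast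
    rw [div_lt_iff₀ hα] at this
    nlinarith
  have hBterm : ∀ n ∈ T, s^((n:ℝ)*α)/Real.Gamma (β + n * α) ≤
      2 * s^(1-β) * f ⌊(n:ℝ)*α + β - 1⌋₊ := by
    intro n hn
    have hμpos := hTμpos n hn
    have hΓeq : Real.Gamma (β + n*α) = Real.Gamma (((n:ℝ)*α + β - 1)+1) := by
      congr 1; ring
    have hsplit : s^((n:ℝ)*α) = s^(1-β) * s^((n:ℝ)*α + β - 1) := by
      rw [← Real.rpow_add hs]; congr 1; ring
    have htb := term_bound hs hμpos
    calc s^((n:ℝ)*α)/Real.Gamma (β + n * α)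
        = s^(1-β) * (s^((n:ℝ)*α + β - 1)/Real.Gamma (((n:ℝ)*α + β - 1)+1)) := by
          rw [hΓeq, hsplit, mul_div_assoc]
      _ ≤ s^(1-β) * (2 * f ⌊(n:ℝ)*α + β - 1⌋₊) := by
          apply mul_le_mul_of_nonneg_left _ (Real.rpow_nonneg hs.le _)
          simpa [hf] using htb
      _ = 2 * s^(1-β) * f ⌊(n:ℝ)*α + β - 1⌋₊ := by ring
  have hB : ∑ n ∈ T, s^((n:ℝ)*α)/Real.Gamma (β + n * α) ≤
      4 * M * s^(1-β) * Real.exp s := by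
    have hs1β : (0:ℝ) ≤ s^(1-β) := Real.rpow_nonneg hs.le _
    calc ∑ n ∈ T, s^((n:ℝ)*α)/Real.Gamma (β + n * α)
        ≤ ∑ n ∈ T, 2 * s^(1-β) * f ⌊(n:ℝ)*α + β - 1⌋₊ := Finset.sum_le_sum hBterm
      _ = 2 * s^(1-β) * ∑ n ∈ T, f ⌊(n:ℝ)*α + β - 1⌋₊ := by rw [← Finset.mul_sum]
      _ ≤ 2 * s^(1-β) * ((M:ℝ) * ∑' k, f k) := by
          apply mul_le_mul_of_nonneg_left _ (by positivity)
          exact sum_floor_comp_le α β hα f hf0 hfs T hTμ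
      _ ≤ 2 * s^(1-β) * ((M:ℝ) * (2 * Real.exp s)) := by
          apply mul_le_mul_of_nonneg_left _ (by positivity)
          apply mul_le_mul_of_nonneg_left htsumf (by positivity)
      _ = 4 * M * s^(1-β) * Real.exp s := by ring
  have hs1β : (0:ℝ) ≤ s^(1-β) := Real.rpow_nonneg hs.le _
  have hMR : (1:ℝ) ≤ (M:ℝ) := by exact_mod_cast hM1
  calc (∑ n ∈ (Finset.range N).filter (fun n => n ≤ n₀),
          s^((n:ℝ)*α)/Real.Gamma (β + n * α)) +
        ∑ n ∈ T, s^((n:ℝ)*α)/Real.Gamma (β + n * α)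
      ≤ C₁ * Real.exp s + 4 * M * s^(1-β) * Real.exp s := add_le_add hA hB
    _ ≤ (C₁ + 4*M) * (1 + s^(1-β)) * Real.exp s := by
        have hexpand : (C₁ + 4*(M:ℝ)) * (1 + s^(1-β)) * Real.exp s =
            C₁ * Real.exp s + 4*(M:ℝ)*s^(1-β)*Real.exp s +
            (C₁*s^(1-β) + 4*(M:ℝ)) * Real.exp s := by ring
        have hnn : 0 ≤ (C₁*s^(1-β) + 4*(M:ℝ)) * Real.exp s := by
          apply mul_nonneg _ hexppos.le
          have := mul_nonneg hC₁0 hs1β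
          linarith
        linarith

/-- Two-parameter Mittag-Leffler function `E_{α,β}(x) = Σ_{n≥0} xⁿ/Γ(β+nα)`. -/
noncomputable def mittagLeffler (α β x : ℝ) : ℝ :=
  ∑' n : ℕ, x ^ n / Real.Gamma (β + n * α)


/-- For `0 < α < 2`, `β > 0` there is `C_{α,β} > 0` with
`E_{α,β}(ω t^α) ≤ C_{α,β}(1+ω^{(1-β)/α})(1+t^{1-β}) exp(ω^{1/α} t)` for all `ω, t ≥ 0`. -/
theorem mittagLeffler_bound (α β : ℝ) (hα₁ : 0 < α) (hα₂ : α < 2) (hβ : 0 < β) :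
    ∃ C > (0 : ℝ), ∀ ω ≥ (0 : ℝ), ∀ t ≥ (0 : ℝ),
      mittagLeffler α β (ω * t ^ α) ≤
        C * (1 + ω ^ ((1 - β) / α)) * (1 + t ^ (1 - β)) * Real.exp (ω ^ (1 / α) * t) := by
  obtain ⟨C, hC0, hCβ, hC⟩ := key α β hα₁ hβ
  refine ⟨C, hC0, ?_⟩
  intro ω hω t ht
  have ha : (0:ℝ) ≤ ω ^ ((1 - β) / α) := Real.rpow_nonneg hω _
  have hb : (0:ℝ) ≤ t ^ (1 - β) := Real.rpow_nonneg ht _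
  set s := ω ^ (1 / α) * t with hsdef
  have hs0 : 0 ≤ s := mul_nonneg (Real.rpow_nonneg hω _) ht
  rcases eq_or_lt_of_le hs0 with hs | hs
  · -- s = 0
    have hx0 : ω * t ^ α = 0 := by
      rcases mul_eq_zero.1 hs.symm with h | h
      · have : ω = 0 := by
          by_contra hne
          have hωpos : 0 < ω := lt_of_le_of_ne hω (Ne.symm hne)
          exact absurd h (ne_of_gt (Real.rpow_pos_of_pos hωpos _))
        rw [this, zero_mul]
      · rw [h, Real.zero_rpow hα₁.ne', mul_zero]
    rw [hx0]
    have hML : mittagLeffler α β 0 = 1 / Real.Gamma β := by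
      rw [mittagLeffler]
      rw [tsum_eq_single 0 (fun n hn => by simp [zero_pow hn])]
      norm_num
    rw [hML, ← hs, Real.exp_zero, mul_one]
    nlinarith [mul_nonneg ha hb, mul_nonneg hC0.le ha, mul_nonneg hC0.le hb,
      mul_nonneg hC0.le (mul_nonneg ha hb)]
  · -- s > 0
    have hωα : (ω ^ (1/α)) ^ α = ω := by
      rw [← Real.rpow_mul hω, one_div_mul_cancel hα₁.ne', Real.rpow_one]
    have hx : ω * t ^ α = s ^ α := by
      rw [hsdef, Real.mul_rpow (Real.rpow_nonneg hω _) ht, hωα]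
    have hterm : ∀ n : ℕ, (ω * t ^ α) ^ n / Real.Gamma (β + n * α) =
        s ^ ((n:ℝ)*α) / Real.Gamma (β + n*α) := by
      intro n
      rw [hx, ← Real.rpow_natCast (s ^ α) n, ← Real.rpow_mul hs.le,
        mul_comm α (n:ℝ)]
    have hML : mittagLeffler α β (ω*t^α) = ∑' n:ℕ, s ^ ((n:ℝ)*α)/Real.Gamma (β+n*α) := by
      rw [mittagLeffler]; exact tsum_congr hterm
    have hbound := hC s hs
    have hsab : s ^ (1-β) = ω ^ ((1-β)/α) * t ^ (1-β) := by
      rw [hsdef, Real.mul_rpow (Real.rpow_nonneg hω _) ht, ← Real.rpow_mul hω]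
      congr 2
      ring
    have hexppos := Real.exp_pos s
    rw [hML]
    calc (∑' n:ℕ, s ^ ((n:ℝ)*α)/Real.Gamma (β+n*α)) ≤ C * (1 + s^(1-β)) * Real.exp s := hbound
      _ ≤ C * (1 + ω ^ ((1 - β) / α)) * (1 + t ^ (1 - β)) * Real.exp s := by
          rw [hsab]
          nlinarith [mul_nonneg (mul_nonneg hC0.le ha) hexppos.le,
            mul_nonneg (mul_nonneg hC0.le hb) hexppos.le,
            mul_nonneg (mul_nonneg (mul_nonneg hC0.le ha) hb) hexppos.le]
end

section
/- Let A be a bounded linear operator on a Banach space E, α > 0, and S_α(t) = E_α(t^α A) = Σ_{n=0}^∞ t^{nα} Aⁿ / Γ(1 + nα). Then S_α(t) x solves the Volterra integral equation u(t) = x + ∫_0^t g_α(t-τ) A u(τ) dτ for every x ∈ E and t ≥ 0, where g_α(t) = t^{α-1}/Γ(α) for t > 0. -/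
open Real MeasureTheory intervalIntegral Filter

set_option maxHeartbeats 1000000

section Aux

lemma betaReal' {p q a : ℝ} (hp : 0 < p) (hq : 0 < q) (ha : 0 < a) :
    ∫ x in (0:ℝ)..a, x ^ (p - 1) * (a - x) ^ (q - 1)
      = Real.Gamma p * Real.Gamma q / Real.Gamma (p + q) * a ^ (p + q - 1) := by
  have hGpq : Real.Gamma (p + q) ≠ 0 := (Real.Gamma_pos_of_pos (by linarith)).ne'
  have h1 : ((∫ x in (0:ℝ)..a, x ^ (p - 1) * (a - x) ^ (q - 1) : ℝ) : ℂ)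
      = ∫ x in (0:ℝ)..a, (x:ℂ) ^ ((p:ℂ) - 1) * ((a:ℂ) - x) ^ ((q:ℂ) - 1) := by
    rw [← intervalIntegral.integral_ofReal]
    refine intervalIntegral.integral_congr fun x hx => ?_
    rw [Set.uIcc_of_le ha.le] at hx
    rw [Complex.ofReal_mul, Complex.ofReal_cpow hx.1,
      Complex.ofReal_cpow (by linarith [hx.2] : (0:ℝ) ≤ a - x)]
    push_cast
    ring
  have h2 := Complex.betaIntegral_scaled (p:ℂ) (q:ℂ) ha
  have h3 := Complex.Gamma_mul_Gamma_eq_betaIntegral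
    (s := (p:ℂ)) (t := (q:ℂ)) (by simpa using hp) (by simpa using hq)
  have hG : Complex.Gamma ((p:ℂ) + q) ≠ 0 := by
    rw [show ((p:ℂ) + q) = ((p + q : ℝ) : ℂ) by push_cast; ring, Complex.Gamma_ofReal]
    exact_mod_cast hGpq
  have hbeta : Complex.betaIntegral p q
      = ((Real.Gamma p * Real.Gamma q / Real.Gamma (p + q) : ℝ) : ℂ) := by
    have hb : Complex.betaIntegral p q
        = Complex.Gamma p * Complex.Gamma q / Complex.Gamma ((p:ℂ) + q) := by
      rw [eq_div_iff hG, h3]; ring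
    rw [hb, show ((p:ℂ) + q) = ((p + q : ℝ) : ℂ) by push_cast; ring,
      Complex.Gamma_ofReal, Complex.Gamma_ofReal, Complex.Gamma_ofReal]
    push_cast
    ring
  have h4 : ((∫ x in (0:ℝ)..a, x ^ (p - 1) * (a - x) ^ (q - 1) : ℝ) : ℂ)
      = ((Real.Gamma p * Real.Gamma q / Real.Gamma (p + q) * a ^ (p + q - 1) : ℝ) : ℂ) := by
    rw [h1, h2, hbeta, Complex.ofReal_mul,
      show ((p:ℂ) + ↑q - 1) = ((p + q - 1 : ℝ) : ℂ) by push_cast; ring,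
      ← Complex.ofReal_cpow ha.le]
    push_cast
    ring
  exact_mod_cast h4

lemma gamma_lb' {α x : ℝ} (hα : 0 < α) (hx : 1 ≤ x) :
    Real.Gamma x * x ^ (min α 1) / (1 + α) ≤ Real.Gamma (x + α) := by
  have hxp : (0:ℝ) < x := lt_of_lt_of_le one_pos hx
  have hGx : 0 < Real.Gamma x := Real.Gamma_pos_of_pos hxp
  have hGxa : 0 < Real.Gamma (x + α) := Real.Gamma_pos_of_pos (by linarith)
  rcases le_or_gt 1 α with h1 | h1
  · -- α ≥ 1
    rw [min_eq_right h1, Real.rpow_one]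
    have hmono : Real.Gamma (x + 1) ≤ Real.Gamma (x + α) := by
      rcases eq_or_lt_of_le h1 with rfl | h1'
      · exact le_rfl
      · exact (Real.Gamma_strictMonoOn_Ici (Set.mem_Ici.mpr (by linarith))
          (Set.mem_Ici.mpr (by linarith)) (by linarith)).le
    have h2 : Real.Gamma (x + 1) = x * Real.Gamma x := Real.Gamma_add_one hxp.ne'
    rw [div_le_iff₀ (by linarith)]
    nlinarith
  · -- α < 1
    rw [min_eq_left h1.le]
    have key := Real.Gamma_mul_add_mul_le_rpow_Gamma_mul_rpow_Gamma
      (s := x + α) (t := x + 1 + α) (a := α) (b := 1 - α)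
      (by linarith) (by linarith) hα (by linarith) (by ring)
    have hcomb : α * (x + α) + (1 - α) * (x + 1 + α) = x + 1 := by ring
    rw [hcomb] at key
    have hG1 : Real.Gamma (x + 1 + α) = (x + α) * Real.Gamma (x + α) := by
      rw [show x + 1 + α = (x + α) + 1 by ring, Real.Gamma_add_one (by linarith)]
    have hxa : (0:ℝ) < x + α := by linarith
    have key2 : x * Real.Gamma x ≤ Real.Gamma (x + α) * (x + α) ^ (1 - α) := by
      have e1 : Real.Gamma (x + α) ^ α * Real.Gamma (x + 1 + α) ^ (1 - α)
          = Real.Gamma (x + α) * (x + α) ^ (1 - α) := by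
        rw [hG1, Real.mul_rpow hxa.le hGxa.le, ← mul_assoc,
          mul_comm (Real.Gamma (x+α) ^ α), mul_assoc, ← Real.rpow_add hGxa]
        norm_num
        ring
      calc x * Real.Gamma x = Real.Gamma (x + 1) := (Real.Gamma_add_one hxp.ne').symm
      _ ≤ _ := key
      _ = _ := e1
    have hb' : (x + α) ^ (1 - α) ≤ (1 + α) * x ^ (1 - α) := by
      have h2 : x + α ≤ (1 + α) * x := by nlinarith
      calc (x + α) ^ (1 - α) ≤ ((1 + α) * x) ^ (1 - α) :=
            Real.rpow_le_rpow hxa.le h2 (by linarith)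
      _ = (1 + α) ^ (1 - α) * x ^ (1 - α) := Real.mul_rpow (by linarith) hxp.le
      _ ≤ (1 + α) ^ (1:ℝ) * x ^ (1 - α) := by
            gcongr <;> linarith
      _ = (1 + α) * x ^ (1 - α) := by rw [Real.rpow_one]
    have key3 : x * Real.Gamma x ≤ Real.Gamma (x + α) * ((1 + α) * x ^ (1 - α)) :=
      key2.trans (by gcongr)
    rw [div_le_iff₀ (by linarith)]
    have hpos : (0:ℝ) < x ^ (1 - α) := Real.rpow_pos_of_pos hxp _
    apply le_of_mul_le_mul_right _ hpos
    calc Real.Gamma x * x ^ α * x ^ (1 - α) = Real.Gamma x * (x ^ α * x ^ (1 - α)) := by ring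
    _ = x * Real.Gamma x := by rw [← Real.rpow_add hxp]; norm_num; ring
    _ ≤ Real.Gamma (x + α) * ((1 + α) * x ^ (1 - α)) := key3
    _ = Real.Gamma (x + α) * (1 + α) * x ^ (1 - α) := by ring

lemma summable_aux' {α : ℝ} (hα : 0 < α) {r : ℝ} (hr : 0 ≤ r) :
    Summable fun n : ℕ => r ^ n / Real.Gamma (1 + n * α) := by
  have hm0 : 0 < min α 1 := lt_min hα one_pos
  have hx : Tendsto (fun n : ℕ => ((1 + n * α : ℝ)) ^ (min α 1)) atTop atTop := by
    apply (tendsto_rpow_atTop hm0).comp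
    apply tendsto_atTop_add_const_left
    exact tendsto_natCast_atTop_atTop.atTop_mul_const hα
  have hev : ∀ᶠ n : ℕ in atTop, 2 * r * (1 + α) ≤ (1 + n * α) ^ (min α 1) :=
    hx.eventually_ge_atTop _
  refine summable_of_ratio_norm_eventually_le (r := 1/2) (by norm_num) ?_
  filter_upwards [hev] with n hn
  have hx0 : (0:ℝ) < 1 + n * α := by positivity
  have hx1 : (1:ℝ) ≤ 1 + n * α := le_add_of_nonneg_right (by positivity)
  have hg1 : 0 < Real.Gamma (1 + n * α) := Real.Gamma_pos_of_pos hx0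
  have hg2 : 0 < Real.Gamma (1 + (n + 1 : ℕ) * α) := Real.Gamma_pos_of_pos (by positivity)
  have hkey := gamma_lb' hα hx1
  have hrw : (1 + n * α) + α = 1 + ((n + 1 : ℕ) : ℝ) * α := by push_cast; ring
  rw [hrw] at hkey
  have h2 : 2 * r * Real.Gamma (1 + n * α) ≤ Real.Gamma (1 + ((n + 1 : ℕ) : ℝ) * α) := by
    calc 2 * r * Real.Gamma (1 + n * α)
        = Real.Gamma (1 + n * α) * (2 * r * (1 + α)) / (1 + α) := by
          field_simp
    _ ≤ Real.Gamma (1 + n * α) * ((1 + n * α) ^ (min α 1)) / (1 + α) := by gcongr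
    _ ≤ _ := hkey
  have hgoal : r ^ (n + 1) * Real.Gamma (1 + n * α)
      ≤ (1/2 * r ^ n) * Real.Gamma (1 + ((n + 1 : ℕ) : ℝ) * α) := by
    have := mul_le_mul_of_nonneg_left h2 (by positivity : (0:ℝ) ≤ 1/2 * r ^ n)
    calc r ^ (n + 1) * Real.Gamma (1 + n * α)
        = 1/2 * r ^ n * (2 * r * Real.Gamma (1 + n * α)) := by ring
    _ ≤ _ := this
  rw [norm_div, norm_div, Real.norm_of_nonneg (pow_nonneg hr _),
    Real.norm_of_nonneg (pow_nonneg hr _), Real.norm_of_nonneg hg1.le,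
    Real.norm_of_nonneg hg2.le, div_le_iff₀ hg2,
    show (1/2 : ℝ) * (r ^ n / Real.Gamma (1 + n * α)) * Real.Gamma (1 + ((n+1:ℕ)) * α)
      = (1/2 * r ^ n * Real.Gamma (1 + ((n+1:ℕ)) * α)) / Real.Gamma (1 + n * α) by ring,
    le_div_iff₀ hg1]
  nlinarith [hgoal, hg2.le]

variable {E : Type*} [NormedAddCommGroup E] [NormedSpace ℝ E] [CompleteSpace E]

omit [CompleteSpace E] in
lemma normPow_le (A : E →L[ℝ] E) : ∀ n : ℕ, ‖A ^ n‖ ≤ ‖A‖ ^ n := by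
  intro n
  induction n with
  | zero => rw [pow_zero, pow_zero]; exact ContinuousLinearMap.norm_id_le
  | succ n ih =>
      rw [pow_succ, pow_succ]
      exact (norm_mul_le _ _).trans (mul_le_mul_of_nonneg_right ih (norm_nonneg _))

lemma coefEq {t α : ℝ} (ht : 0 ≤ t) (n : ℕ) : t ^ ((n:ℝ) * α) = (t ^ α) ^ n := by
  rw [mul_comm, Real.rpow_mul ht, Real.rpow_natCast]

lemma gammaPos {α : ℝ} (hα : 0 < α) (n : ℕ) : 0 < Real.Gamma (1 + (n:ℝ) * α) :=
  Real.Gamma_pos_of_pos (by positivity)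

lemma opSummable {α : ℝ} (hα : 0 < α) (A : E →L[ℝ] E) {t : ℝ} (ht : 0 ≤ t) :
    Summable fun n : ℕ => (t ^ ((n:ℝ) * α) / Real.Gamma (1 + n * α)) • (A ^ n) := by
  apply Summable.of_norm
  have hr : 0 ≤ t ^ α * ‖A‖ := mul_nonneg (Real.rpow_nonneg ht α) (norm_nonneg A)
  apply Summable.of_nonneg_of_le (fun n => norm_nonneg _) _ (summable_aux' hα hr)
  intro n
  rw [norm_smul (t ^ ((n:ℝ) * α) / Real.Gamma (1 + n * α)) (A ^ n),
    Real.norm_of_nonneg (by positivity : (0:ℝ) ≤ t ^ ((n:ℝ)*α) / Real.Gamma (1 + n*α))]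
  rw [coefEq ht, mul_pow]
  have hd : 0 ≤ (t ^ α) ^ n / Real.Gamma (1 + n*α) :=
    div_nonneg (pow_nonneg (Real.rpow_nonneg ht α) n) (gammaPos hα n).le
  calc (t ^ α) ^ n / Real.Gamma (1 + n*α) * ‖A ^ n‖
      ≤ (t ^ α) ^ n / Real.Gamma (1 + n*α) * ‖A‖ ^ n :=
        mul_le_mul_of_nonneg_left (normPow_le A n) hd
  _ = (t ^ α) ^ n * ‖A‖ ^ n / Real.Gamma (1 + n*α) := by ring

lemma summable_vec {α : ℝ} (hα : 0 < α) (A : E →L[ℝ] E) (x : E) {t : ℝ} (ht : 0 ≤ t) :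
    Summable fun n : ℕ => (t ^ ((n:ℝ) * α) / Real.Gamma (1 + n * α)) • ((A ^ n) x) := by
  apply Summable.of_norm
  have hr : 0 ≤ t ^ α * ‖A‖ := mul_nonneg (Real.rpow_nonneg ht α) (norm_nonneg A)
  apply Summable.of_nonneg_of_le (fun n => norm_nonneg _) _ ((summable_aux' hα hr).mul_right ‖x‖)
  intro n
  rw [norm_smul (t ^ ((n:ℝ) * α) / Real.Gamma (1 + n * α)) ((A ^ n) x),
    Real.norm_of_nonneg (by positivity : (0:ℝ) ≤ t ^ ((n:ℝ)*α) / Real.Gamma (1 + n*α))]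
  rw [coefEq ht, mul_pow]
  have hd : 0 ≤ (t ^ α) ^ n / Real.Gamma (1 + n*α) :=
    div_nonneg (pow_nonneg (Real.rpow_nonneg ht α) n) (gammaPos hα n).le
  calc (t ^ α) ^ n / Real.Gamma (1 + n*α) * ‖(A ^ n) x‖
      ≤ (t ^ α) ^ n / Real.Gamma (1 + n*α) * (‖A‖ ^ n * ‖x‖) :=
        mul_le_mul_of_nonneg_left (((A ^ n).le_opNorm x).trans
          (mul_le_mul_of_nonneg_right (normPow_le A n) (norm_nonneg x))) hd
  _ = (t ^ α) ^ n * ‖A‖ ^ n / Real.Gamma (1 + n*α) * ‖x‖ := by ring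

end Aux

/-- Operator-valued two-parameter Mittag-Leffler function
`E_{α,β}(t^α A) = Σ_{n≥0} t^{nα} Aⁿ / Γ(β+nα)`. -/
noncomputable def opML {E : Type*} [NormedAddCommGroup E] [NormedSpace ℝ E]
    (α β : ℝ) (A : E →L[ℝ] E) (t : ℝ) : E →L[ℝ] E :=
  ∑' n : ℕ, (t ^ ((n : ℝ) * α) / Real.Gamma (β + n * α)) • A ^ n

/-- The kernel `g_α(t) = t^{α-1}/Γ(α)` for `t > 0`, `0` otherwise. -/
noncomputable def gKer (α t : ℝ) : ℝ :=
  if 0 < t then t ^ (α - 1) / Real.Gamma α else 0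

section Apply

variable {E : Type*} [NormedAddCommGroup E] [NormedSpace ℝ E] [CompleteSpace E]

lemma opML_apply {α : ℝ} (hα : 0 < α) (A : E →L[ℝ] E) (x : E) {t : ℝ} (ht : 0 ≤ t) :
    opML α 1 A t x = ∑' n : ℕ, (t ^ ((n:ℝ) * α) / Real.Gamma (1 + n * α)) • ((A ^ n) x) := by
  have h := opSummable hα A ht
  calc opML α 1 A t x
      = (ContinuousLinearMap.apply ℝ E x)
          (∑' n : ℕ, (t ^ ((n:ℝ) * α) / Real.Gamma (1 + n * α)) • A ^ n) := by
        simp only [opML, ContinuousLinearMap.apply_apply]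
  _ = ∑' n : ℕ, (ContinuousLinearMap.apply ℝ E x)
        ((t ^ ((n:ℝ) * α) / Real.Gamma (1 + n * α)) • A ^ n) :=
      (ContinuousLinearMap.apply ℝ E x).map_tsum h
  _ = _ := by
      simp [ContinuousLinearMap.apply_apply, ContinuousLinearMap.smul_apply]

end Apply

/-- `S_α(t)x = E_α(t^α A)x` solves the Volterra equation
`u(t) = x + ∫_0^t g_α(t-τ) A u(τ) dτ`. -/
theorem opML_solves_volterra
    {E : Type*} [NormedAddCommGroup E] [NormedSpace ℝ E] [CompleteSpace E]
    (α : ℝ) (hα : 0 < α) (A : E →L[ℝ] E) :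
    ∀ (x : E) (t : ℝ), 0 ≤ t →
      opML α 1 A t x = x + ∫ τ in (0:ℝ)..t, gKer α (t - τ) • A (opML α 1 A τ x) := by
  intro x t ht
  rcases eq_or_lt_of_le ht with h0 | ht0
  · -- t = 0
    subst h0
    rw [intervalIntegral.integral_same, add_zero, opML_apply hα A x le_rfl]
    rw [tsum_eq_single 0 ?side]
    · norm_num
    case side =>
      intro n hn
      have : ((0:ℝ)) ^ ((n:ℝ) * α) = 0 := by
        apply Real.zero_rpow
        have : 0 < (n:ℝ) := by exact_mod_cast Nat.pos_of_ne_zero hn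
        positivity
      rw [this]
      simp
  · -- 0 < t
    have hGα : 0 < Real.Gamma α := Real.Gamma_pos_of_pos hα
    set F : ℕ → ℝ → E := fun n τ =>
      (gKer α (t - τ) * (τ ^ ((n:ℝ) * α) / Real.Gamma (1 + n * α))) • ((A ^ (n+1)) x) with hF
    -- integrand identity
    have hEq : Set.EqOn (fun τ => gKer α (t - τ) • A (opML α 1 A τ x))
        (fun τ => ∑' n : ℕ, F n τ) (Set.Ioo 0 t) := by
      intro τ hτ
      simp only
      rw [opML_apply hα A x hτ.1.le,
        A.map_tsum (summable_vec hα A x hτ.1.le),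
        ← Summable.tsum_const_smul (gKer α (t - τ)) ((summable_vec hα A x hτ.1.le).mapL A)]
      refine tsum_congr fun n => ?_
      rw [hF]
      rw [ContinuousLinearMap.map_smul, smul_smul]
      congr 1
      rw [pow_succ', ContinuousLinearMap.mul_apply]
    -- measurability of gKer
    have hg_meas : Measurable (gKer α) := by
      unfold gKer
      exact Measurable.ite (measurableSet_lt measurable_const measurable_id)
        (by measurability) measurable_const
    have hg'_meas : ∀ n : ℕ, Measurable fun τ =>
        gKer α (t - τ) * (τ ^ ((n:ℝ) * α) / Real.Gamma (1 + n * α)) := by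
      intro n
      exact (hg_meas.comp (measurable_const.sub measurable_id)).mul (by measurability)
    -- base integrability
    have hbase : IntegrableOn (fun τ => (t - τ) ^ (α - 1)) (Set.Ioo 0 t) volume := by
      have h1 : IntervalIntegrable (fun s : ℝ => s ^ (α - 1)) volume 0 t :=
        intervalIntegrable_rpow' (by linarith)
      have h2 := (h1.comp_sub_left t).symm
      rw [sub_self, sub_zero] at h2
      exact ((intervalIntegrable_iff_integrableOn_Ioc_of_le ht0.le).mp h2).mono_set
        Set.Ioo_subset_Ioc_self
    -- integrability of the scalar coefficients
    have hg'_int : ∀ n : ℕ, IntegrableOn (fun τ =>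
        gKer α (t - τ) * (τ ^ ((n:ℝ) * α) / Real.Gamma (1 + n * α))) (Set.Ioo 0 t) volume := by
      intro n
      have hC : (0:ℝ) ≤ t ^ ((n:ℝ)*α) / (Real.Gamma α * Real.Gamma (1 + n*α)) := by
        have := gammaPos hα n
        positivity
      refine Integrable.mono (hbase.mul_const
        (t ^ ((n:ℝ)*α) / (Real.Gamma α * Real.Gamma (1 + n*α))))
        ((hg'_meas n).aestronglyMeasurable) ?_
      filter_upwards [ae_restrict_mem measurableSet_Ioo] with τ hτ
      have h1 : 0 < t - τ := by linarith [hτ.2]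
      have hτ0 : 0 < τ := hτ.1
      rw [gKer, if_pos h1]
      have hG := gammaPos hα n
      rw [Real.norm_of_nonneg (by positivity), Real.norm_of_nonneg (by positivity)]
      have hmono : τ ^ ((n:ℝ)*α) ≤ t ^ ((n:ℝ)*α) :=
        Real.rpow_le_rpow hτ0.le (by linarith [hτ.2]) (by positivity)
      calc (t - τ) ^ (α-1) / Real.Gamma α * (τ ^ ((n:ℝ)*α) / Real.Gamma (1+n*α))
          = ((t - τ) ^ (α-1) * τ ^ ((n:ℝ)*α)) / (Real.Gamma α * Real.Gamma (1+n*α)) := by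
            ring
      _ ≤ ((t - τ) ^ (α-1) * t ^ ((n:ℝ)*α)) / (Real.Gamma α * Real.Gamma (1+n*α)) := by
            gcongr
      _ = (t - τ) ^ (α-1) * (t ^ ((n:ℝ)*α) / (Real.Gamma α * Real.Gamma (1+n*α))) := by
            ring
    -- value of the scalar integrals (Beta)
    have hval : ∀ n : ℕ, (∫ τ in Set.Ioo (0:ℝ) t,
        gKer α (t - τ) * (τ ^ ((n:ℝ) * α) / Real.Gamma (1 + n * α)))
        = t ^ (((n+1:ℕ):ℝ) * α) / Real.Gamma (1 + ((n+1:ℕ):ℝ) * α) := by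
      intro n
      have hGn := gammaPos hα n
      have e1 : Set.EqOn (fun τ => gKer α (t - τ) * (τ ^ ((n:ℝ) * α) / Real.Gamma (1 + n * α)))
          (fun τ => (τ ^ (((n:ℝ)*α + 1) - 1) * (t - τ) ^ (α - 1))
            * (Real.Gamma α * Real.Gamma (1 + n*α))⁻¹) (Set.Ioo 0 t) := by
        intro τ hτ
        simp only
        rw [gKer, if_pos (by linarith [hτ.2] : (0:ℝ) < t - τ),
          show ((n:ℝ)*α + 1) - 1 = (n:ℝ)*α by ring]
        field_simp
      rw [MeasureTheory.setIntegral_congr_fun measurableSet_Ioo e1,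
        MeasureTheory.integral_mul_const,
        ← MeasureTheory.integral_Ioc_eq_integral_Ioo,
        ← intervalIntegral.integral_of_le ht0.le,
        betaReal' (by positivity) hα ht0]
      have hGm := gammaPos hα (n+1)
      rw [show (n:ℝ)*α + 1 + α - 1 = ((n+1:ℕ):ℝ)*α by push_cast; ring,
        show (n:ℝ)*α + 1 + α = 1 + ((n+1:ℕ):ℝ)*α by push_cast; ring,
        show (n:ℝ)*α + 1 = 1 + (n:ℝ)*α by ring]
      field_simp
    -- integrability of F n
    have hInt : ∀ n : ℕ, Integrable (F n) (volume.restrict (Set.Ioo (0:ℝ) t)) := by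
      intro n
      exact (hg'_int n).smul_const _
    -- norm integrals
    have hNormVal : ∀ n : ℕ, (∫ τ in Set.Ioo (0:ℝ) t, ‖F n τ‖)
        = (t ^ (((n+1:ℕ):ℝ) * α) / Real.Gamma (1 + ((n+1:ℕ):ℝ) * α)) * ‖(A ^ (n+1)) x‖ := by
      intro n
      have e2 : Set.EqOn (fun τ => ‖F n τ‖)
          (fun τ => (gKer α (t - τ) * (τ ^ ((n:ℝ) * α) / Real.Gamma (1 + n * α)))
            * ‖(A ^ (n+1)) x‖) (Set.Ioo 0 t) := by
        intro τ hτ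
        have hG := gammaPos hα n
        have h1 : 0 < t - τ := by linarith [hτ.2]
        have hτ0 : 0 < τ := hτ.1
        simp only [hF, norm_smul]
        rw [Real.norm_of_nonneg]
        rw [gKer, if_pos h1]
        positivity
      rw [MeasureTheory.setIntegral_congr_fun measurableSet_Ioo e2,
        MeasureTheory.integral_mul_const, hval n]
    -- summability of norm integrals
    have hSum : Summable fun n : ℕ => ∫ τ in Set.Ioo (0:ℝ) t, ‖F n τ‖ := by
      have hr : 0 ≤ t ^ α * ‖A‖ := mul_nonneg (Real.rpow_nonneg ht α) (norm_nonneg A)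
      have hbig : Summable fun n : ℕ =>
          ((t ^ α * ‖A‖) ^ (n+1) / Real.Gamma (1 + ((n+1:ℕ):ℝ) * α)) * ‖x‖ := by
        have := ((summable_aux' hα hr).mul_right ‖x‖)
        exact (summable_nat_add_iff 1).mpr this
      apply Summable.of_nonneg_of_le _ _ hbig
      · intro n
        rw [hNormVal n]
        have := gammaPos hα (n+1)
        positivity
      · intro n
        rw [hNormVal n, coefEq ht (n+1), mul_pow]
        have hGm := gammaPos hα (n+1)
        have hd : 0 ≤ (t ^ α) ^ (n+1) / Real.Gamma (1 + ((n+1:ℕ):ℝ)*α) :=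
          div_nonneg (pow_nonneg (Real.rpow_nonneg ht α) (n+1)) (gammaPos hα (n+1)).le
        calc (t ^ α) ^ (n+1) / Real.Gamma (1 + ((n+1:ℕ):ℝ)*α) * ‖(A ^ (n+1)) x‖
            ≤ (t ^ α) ^ (n+1) / Real.Gamma (1 + ((n+1:ℕ):ℝ)*α) * (‖A‖ ^ (n+1) * ‖x‖) :=
              mul_le_mul_of_nonneg_left (((A ^ (n+1)).le_opNorm x).trans
                (mul_le_mul_of_nonneg_right (normPow_le A (n+1)) (norm_nonneg x))) hd
        _ = (t ^ α) ^ (n+1) * ‖A‖ ^ (n+1) / Real.Gamma (1 + ((n+1:ℕ):ℝ)*α) * ‖x‖ := by ring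
    -- main computation
    rw [intervalIntegral.integral_of_le ht0.le, MeasureTheory.integral_Ioc_eq_integral_Ioo,
      MeasureTheory.setIntegral_congr_fun measurableSet_Ioo hEq,
      ← MeasureTheory.integral_tsum_of_summable_integral_norm hInt hSum]
    have hterm : ∀ n : ℕ, (∫ τ in Set.Ioo (0:ℝ) t, F n τ)
        = (t ^ (((n+1:ℕ):ℝ) * α) / Real.Gamma (1 + ((n+1:ℕ):ℝ) * α)) • ((A ^ (n+1)) x) := by
      intro n
      simp only [hF]
      rw [_root_.integral_smul_const, hval n]
    rw [tsum_congr hterm, opML_apply hα A x ht,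
      Summable.tsum_eq_zero_add (summable_vec hα A x ht)]
    congr 1
    norm_num
end
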